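/- For integers m ≥ 64 and k with 2 ≤ k ≤ √m, and any real d ≥ 1, the quantity h(k) := (1 + 4/(k^{2/d}(m-k-1)))^{k-1} satisfies h(k) ≤ 1 + 4/m^{1/4 + 1/(d+1)}. -/

import Mathlib

set_option maxHeartbeats 1000000

lemma aux_exp_le {t : ℝ} (h0 : 0 ≤ t) (h1 : t ≤ 1) : Real.exp t ≤ 1 + 2*t := by
  have hc := convexOn_exp.2 (Set.mem_univ (0:ℝ)) (Set.mem_univ (1:ℝ))
    (by linarith : (0:ℝ) ≤ 1 - t) h0 (by ring)
  simp only [smul_eq_mul, mul_zero, mul_one, zero_add, Real.exp_zero] at hc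
  have he : Real.exp 1 < 2.7182818286 := Real.exp_one_lt_d9
  nlinarith [hc, he]

lemma aux_num : (128/55 : ℝ) ≤ (64:ℝ) ^ ((1:ℝ)/4) := by
  have := (Real.le_rpow_inv_iff_of_pos (x := (128/55:ℝ)) (y := 64) (z := 4)
    (by norm_num) (by norm_num) (by norm_num)).mpr
  rw [show (1:ℝ)/4 = ((4:ℝ))⁻¹ by norm_num]
  apply this
  rw [show (4:ℝ) = ((4:ℕ):ℝ) by norm_num, Real.rpow_natCast]
  norm_num

theorem stmt_15 (m k : ℕ) (hm : 64 ≤ m) (hk : 2 ≤ k)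
    (hkm : (k : ℝ) ≤ Real.sqrt m) (d : ℝ) (hd : 1 ≤ d) :
    (1 + 4 / ((k : ℝ) ^ (2 / d) * ((m : ℝ) - k - 1))) ^ (k - 1)
      ≤ 1 + 4 / (m : ℝ) ^ ((1 : ℝ) / 4 + 1 / (d + 1)) := by
  set M : ℝ := (m : ℝ) with hM
  set K : ℝ := (k : ℝ) with hK
  have hM64 : (64:ℝ) ≤ M := by rw [hM]; exact_mod_cast hm
  have hMpos : (0:ℝ) < M := by linarith
  have hK2 : (2:ℝ) ≤ K := by rw [hK]; exact_mod_cast hk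
  have hKpos : (0:ℝ) < K := by linarith
  have hdpos : (0:ℝ) < d := by linarith
  set α : ℝ := (1:ℝ)/4 + 1/(d+1) with hα
  have hα14 : (1:ℝ)/4 ≤ α := by
    have : (0:ℝ) < 1/(d+1) := by positivity
    rw [hα]; linarith
  have hα34 : α ≤ 3/4 := by
    have h2 : (1:ℝ)/(d+1) ≤ 1/2 := by
      apply one_div_le_one_div_of_le <;> linarith
    rw [hα]; linarith
  -- sqrt m ≤ M/8
  have hsqrt : Real.sqrt M ≤ M/8 := by
    rw [show M/8 = Real.sqrt ((M/8)^2) by rw [Real.sqrt_sq (by linarith)]]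
    apply Real.sqrt_le_sqrt
    nlinarith
  have hKM : K ≤ M/8 := le_trans hkm hsqrt
  have hP : (55/64) * M ≤ M - K - 1 := by linarith
  have hPpos : (0:ℝ) < M - K - 1 := by nlinarith
  have hKrpos : (0:ℝ) < K ^ (2/d) := Real.rpow_pos_of_pos hKpos _
  set x : ℝ := 4 / (K ^ (2/d) * (M - K - 1)) with hx
  have hxpos : 0 < x := by positivity
  -- M^(1/4) ≥ 2 and related bounds
  have hM14 : (64:ℝ) ^ ((1:ℝ)/4) ≤ M ^ ((1:ℝ)/4) :=
    Real.rpow_le_rpow (by norm_num) hM64 (by norm_num)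
  have hM1 : (1:ℝ) ≤ M := by linarith
  -- c : bound exponent for K^(1-2/d)
  obtain ⟨c, hc1, hc2⟩ : ∃ c : ℝ, K ^ (1 - 2/d) ≤ M ^ c ∧ c - 1 + α ≤ -(1/4) := by
    rcases le_or_gt 2 d with hd2 | hd2
    · refine ⟨1/2 - 1/d, ?_, ?_⟩
      · have he : 0 ≤ 1 - 2/d := by
          have : 2/d ≤ 1 := by rw [div_le_one hdpos]; linarith
          linarith
        calc K ^ (1 - 2/d) ≤ (Real.sqrt M) ^ (1 - 2/d) :=
              Real.rpow_le_rpow (le_of_lt hKpos) hkm he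
          _ = (M ^ ((1:ℝ)/2)) ^ (1 - 2/d) := by rw [Real.sqrt_eq_rpow]
          _ = M ^ (1/2 - 1/d) := by
              rw [← Real.rpow_mul (le_of_lt hMpos)]; ring_nf
      · have h1 : (1:ℝ)/(d+1) ≤ 1/d := by
          apply one_div_le_one_div_of_le <;> linarith
        simp only [hα]; linarith
    · refine ⟨0, ?_, ?_⟩
      · rw [Real.rpow_zero]
        apply Real.rpow_le_one_of_one_le_of_nonpos (by linarith)
        have : 1 < 2/d := by rw [lt_div_iff₀ hdpos]; linarith
        linarith
      · simp only [hα]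
        have h2 : (1:ℝ)/(d+1) ≤ 1/2 := by
          apply one_div_le_one_div_of_le <;> linarith
        linarith
  -- key bound on t
  set t : ℝ := ((k-1 : ℕ) : ℝ) * x with ht
  have hkcast : ((k-1 : ℕ) : ℝ) = K - 1 := by
    rw [Nat.cast_sub (by omega)]; simp [hK]
  have hMα : M ^ (c - 1 + α) ≤ 55/128 := by
    calc M ^ (c - 1 + α) ≤ M ^ (-(1/4):ℝ) :=
          Real.rpow_le_rpow_of_exponent_le hM1 hc2
      _ = (M ^ ((1:ℝ)/4))⁻¹ := by
          rw [← Real.rpow_neg (le_of_lt hMpos)]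
      _ ≤ ((64:ℝ) ^ ((1:ℝ)/4))⁻¹ := by
          apply inv_anti₀ (by positivity) hM14
      _ ≤ (128/55:ℝ)⁻¹ := by
          apply inv_anti₀ (by norm_num) aux_num
      _ = 55/128 := by norm_num
  have key : t ≤ 2 * M ^ (-α) := by
    calc t ≤ K * x := by
          rw [ht, hkcast]
          nlinarith [hxpos]
      _ = 4 * K ^ (1 - 2/d) / (M - K - 1) := by
          rw [hx, Real.rpow_sub hKpos, Real.rpow_one]
          field_simp
      _ ≤ 4 * M ^ c / ((55/64) * M) := by
          apply div_le_div₀ (by positivity) (by nlinarith [hc1]) (by positivity) hP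
      _ = (256/55) * M ^ (c - 1 + α) * M ^ (-α) := by
          rw [mul_assoc, ← Real.rpow_add hMpos, show c - 1 + α + -α = c - 1 by ring,
            Real.rpow_sub hMpos, Real.rpow_one]
          field_simp
          ring
      _ ≤ (256/55) * (55/128) * M ^ (-α) := by
          have : (0:ℝ) ≤ M ^ (-α) := by positivity
          nlinarith [hMα]
      _ = 2 * M ^ (-α) := by norm_num
  have hMαle : M ^ (-α) ≤ 1/2 := by
    calc M ^ (-α) ≤ M ^ (-(1/4):ℝ) :=
          Real.rpow_le_rpow_of_exponent_le hM1 (by linarith)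
      _ = (M ^ ((1:ℝ)/4))⁻¹ := by
          rw [← Real.rpow_neg (le_of_lt hMpos)]
      _ ≤ ((64:ℝ) ^ ((1:ℝ)/4))⁻¹ := inv_anti₀ (by positivity) hM14
      _ ≤ (2:ℝ)⁻¹ := by
          apply inv_anti₀ (by norm_num)
          calc (2:ℝ) ≤ 128/55 := by norm_num
            _ ≤ (64:ℝ) ^ ((1:ℝ)/4) := aux_num
      _ = 1/2 := by norm_num
  have ht1 : t ≤ 1 := by linarith
  have ht0 : 0 ≤ t := by positivity
  have hfin : 4 / M ^ α = 4 * M ^ (-α) := by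
    rw [Real.rpow_neg (le_of_lt hMpos)]; ring
  calc (1 + x) ^ (k - 1) ≤ (Real.exp x) ^ (k-1) := by
        apply pow_le_pow_left₀ (by positivity) (by linarith [Real.add_one_le_exp x])
    _ = Real.exp t := by rw [ht, ← Real.exp_nat_mul]
    _ ≤ 1 + 2 * t := aux_exp_le ht0 ht1
    _ ≤ 1 + 4 / M ^ α := by rw [hfin]; linarith
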